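/- Let G be a finite graph with vertex set V and let H be a symmetric invertible graph-structured block matrix (H_{ij} = 0 when d(i,j) > 1) whose singular values lie in [σ̲, σ̄] with 0 < σ̲ ≤ σ̄. Then for all i, j ∈ V, the block (H⁻¹)_{ij} satisfies ‖(H⁻¹)_{ij}‖ ≤ (σ̄/σ̲²) · ρ^{⌈(d(i,j)−1)/2⌉} where ρ = (σ̄² − σ̲²)/(σ̄² + σ̲²) and ‖·‖ is the operator 2-norm. -/

import Mathlib

open scoped Matrix.Norms.L2Operator

open Matrix Finset

set_option linter.unusedSectionVars false

section AuxNorm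

private lemma euclid_norm_eq {ι : Type*} [Fintype ι] (v : ι → ℝ) :
    ‖(WithLp.equiv 2 (ι → ℝ)).symm v‖ = Real.sqrt (v ⬝ᵥ v) := by
  rw [EuclideanSpace.norm_eq]; congr 1; simp [dotProduct, sq_abs, sq]

private lemma l2_opNorm_le_of_mulVec {ι m : Type*} [Fintype ι] [DecidableEq ι] [Fintype m]
    (A : Matrix m ι ℝ) (a : ℝ) (ha : 0 ≤ a)
    (h : ∀ v : ι → ℝ, Real.sqrt ((A *ᵥ v) ⬝ᵥ (A *ᵥ v)) ≤ a * Real.sqrt (v ⬝ᵥ v)) :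
    ‖A‖ ≤ a := by
  rw [Matrix.l2_opNorm_def]
  refine ContinuousLinearMap.opNorm_le_bound _ ha fun x => ?_
  have h1 : (LinearEquiv.trans Matrix.toEuclideanLin LinearMap.toContinuousLinearMap A) x
      = (WithLp.equiv 2 (m → ℝ)).symm (A *ᵥ (WithLp.equiv 2 (ι → ℝ) x)) := rfl
  have h2 : x = (WithLp.equiv 2 (ι → ℝ)).symm ((WithLp.equiv 2 (ι → ℝ)) x) := rfl
  rw [h1, h2, euclid_norm_eq, euclid_norm_eq]
  exact h _

private lemma l2_opNorm_one_le {ι : Type*} [Fintype ι] [DecidableEq ι] :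
    ‖(1 : Matrix ι ι ℝ)‖ ≤ 1 := by
  apply l2_opNorm_le_of_mulVec _ _ zero_le_one
  intro v
  rw [Matrix.one_mulVec, one_mul]

private lemma dotTranspose {ι : Type*} [Fintype ι] (A : Matrix ι ι ℝ) (u v : ι → ℝ) :
    u ⬝ᵥ (Aᵀ *ᵥ v) = (A *ᵥ u) ⬝ᵥ v := by
  rw [Matrix.dotProduct_mulVec, Matrix.vecMul_transpose, dotProduct_comm]

private lemma psd_quad {ι : Type*} [Fintype ι] {M : Matrix ι ι ℝ} (h : M.PosSemidef) (v : ι → ℝ) :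
    0 ≤ v ⬝ᵥ (M *ᵥ v) := by simpa using h.dotProduct_mulVec_nonneg v

private lemma psd_smul {ι : Type*} [Fintype ι] {M : Matrix ι ι ℝ} (h : M.PosSemidef) {c : ℝ}
    (hc : 0 ≤ c) : (c • M).PosSemidef := by
  refine Matrix.PosSemidef.of_dotProduct_mulVec_nonneg ?_ fun v => ?_
  · show (c • M)ᴴ = c • M
    rw [Matrix.conjTranspose_smul, h.1, star_trivial]
  · rw [Matrix.smul_mulVec, dotProduct_smul]
    have := h.dotProduct_mulVec_nonneg v
    simp only [star_trivial] at this ⊢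
    exact mul_nonneg hc this

private lemma norm_le_of_sq {ι : Type*} [Fintype ι] [DecidableEq ι]
    (A : Matrix ι ι ℝ) (a : ℝ) (ha : 0 ≤ a)
    (h : (a ^ 2 • (1 : Matrix ι ι ℝ) - Aᵀ * A).PosSemidef) : ‖A‖ ≤ a := by
  apply l2_opNorm_le_of_mulVec A a ha
  intro v
  have h1 := psd_quad h v
  rw [Matrix.sub_mulVec, Matrix.smul_mulVec, Matrix.one_mulVec, dotProduct_sub,
    dotProduct_smul, ← Matrix.mulVec_mulVec, dotTranspose A v (A *ᵥ v), smul_eq_mul] at h1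
  have h2 : (A *ᵥ v) ⬝ᵥ (A *ᵥ v) ≤ a ^ 2 * (v ⬝ᵥ v) := by linarith
  calc Real.sqrt ((A *ᵥ v) ⬝ᵥ (A *ᵥ v)) ≤ Real.sqrt (a ^ 2 * (v ⬝ᵥ v)) := Real.sqrt_le_sqrt h2
    _ = a * Real.sqrt (v ⬝ᵥ v) := by
        rw [Real.sqrt_mul (sq_nonneg a), Real.sqrt_sq ha]

private lemma norm_le_of_pm {ι : Type*} [Fintype ι] [DecidableEq ι]
    (A : Matrix ι ι ℝ) (hs : Aᵀ = A) (a : ℝ) (ha : 0 ≤ a)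
    (h1 : (a • (1 : Matrix ι ι ℝ) - A).PosSemidef)
    (h2 : (a • (1 : Matrix ι ι ℝ) + A).PosSemidef) :
    ‖A‖ ≤ a := by
  have quad : ∀ v : ι → ℝ, |v ⬝ᵥ (A *ᵥ v)| ≤ a * (v ⬝ᵥ v) := by
    intro v
    have q1 := psd_quad h1 v
    have q2 := psd_quad h2 v
    rw [Matrix.sub_mulVec, Matrix.smul_mulVec, Matrix.one_mulVec, dotProduct_sub,
      dotProduct_smul, smul_eq_mul] at q1
    rw [Matrix.add_mulVec, Matrix.smul_mulVec, Matrix.one_mulVec, dotProduct_add,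
      dotProduct_smul, smul_eq_mul] at q2
    rw [abs_le]; constructor <;> linarith
  have symm : ∀ u v : ι → ℝ, v ⬝ᵥ (A *ᵥ u) = u ⬝ᵥ (A *ᵥ v) := by
    intro u v
    conv_lhs => rw [← hs]
    rw [dotTranspose, dotProduct_comm]
  have bilin : ∀ u v : ι → ℝ, u ⬝ᵥ (A *ᵥ v) ≤ (a / 2) * (u ⬝ᵥ u + v ⬝ᵥ v) := by
    intro u v
    have e1 := quad (u + v)
    have e2 := quad (u - v)
    have k1 : (u + v) ⬝ᵥ (A *ᵥ (u + v)) = u ⬝ᵥ (A *ᵥ u) + 2 * (u ⬝ᵥ (A *ᵥ v)) + v ⬝ᵥ (A *ᵥ v) := by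
      simp only [Matrix.mulVec_add, dotProduct_add, add_dotProduct, symm u v]
      ring
    have k2 : (u - v) ⬝ᵥ (A *ᵥ (u - v)) = u ⬝ᵥ (A *ᵥ u) - 2 * (u ⬝ᵥ (A *ᵥ v)) + v ⬝ᵥ (A *ᵥ v) := by
      simp only [Matrix.mulVec_sub, dotProduct_sub, sub_dotProduct, symm u v]
      ring
    have n1 : (u + v) ⬝ᵥ (u + v) + (u - v) ⬝ᵥ (u - v) = 2 * (u ⬝ᵥ u) + 2 * (v ⬝ᵥ v) := by
      simp only [dotProduct_add, dotProduct_sub, add_dotProduct, sub_dotProduct,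
        dotProduct_comm v u]
      ring
    rw [abs_le] at e1 e2
    nlinarith [e1.2, e2.1]
  have bilin' : ∀ u v : ι → ℝ, ∀ s : ℝ, 0 < s →
      u ⬝ᵥ (A *ᵥ v) ≤ (a / 2) * (s * (u ⬝ᵥ u) + s⁻¹ * (v ⬝ᵥ v)) := by
    intro u v s hspos
    have hts : 0 < Real.sqrt s := Real.sqrt_pos.mpr hspos
    have hss : Real.sqrt s * Real.sqrt s = s := Real.mul_self_sqrt hspos.le
    have lhs_eq : (Real.sqrt s • u) ⬝ᵥ (A *ᵥ ((Real.sqrt s)⁻¹ • v)) = u ⬝ᵥ (A *ᵥ v) := by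
      rw [Matrix.mulVec_smul, smul_dotProduct, dotProduct_smul, smul_eq_mul, smul_eq_mul,
        ← mul_assoc, mul_inv_cancel₀ hts.ne', one_mul]
    have e_uu : (Real.sqrt s • u) ⬝ᵥ (Real.sqrt s • u) = s * (u ⬝ᵥ u) := by
      rw [smul_dotProduct, dotProduct_smul, smul_eq_mul, smul_eq_mul, ← mul_assoc, hss]
    have e_vv : ((Real.sqrt s)⁻¹ • v) ⬝ᵥ ((Real.sqrt s)⁻¹ • v) = s⁻¹ * (v ⬝ᵥ v) := by
      rw [smul_dotProduct, dotProduct_smul, smul_eq_mul, smul_eq_mul, ← mul_assoc, ← mul_inv, hss]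
    calc u ⬝ᵥ (A *ᵥ v) = (Real.sqrt s • u) ⬝ᵥ (A *ᵥ ((Real.sqrt s)⁻¹ • v)) := lhs_eq.symm
      _ ≤ (a / 2) * ((Real.sqrt s • u) ⬝ᵥ (Real.sqrt s • u)
            + ((Real.sqrt s)⁻¹ • v) ⬝ᵥ ((Real.sqrt s)⁻¹ • v)) := bilin _ _
      _ = (a / 2) * (s * (u ⬝ᵥ u) + s⁻¹ * (v ⬝ᵥ v)) := by rw [e_uu, e_vv]
  apply l2_opNorm_le_of_mulVec A a ha
  intro v
  set u := A *ᵥ v with hu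
  have hp0 : (0:ℝ) ≤ u ⬝ᵥ u := Finset.sum_nonneg fun i _ => mul_self_nonneg _
  have hr0 : (0:ℝ) ≤ v ⬝ᵥ v := Finset.sum_nonneg fun i _ => mul_self_nonneg _
  set p := u ⬝ᵥ u with hp
  set r := v ⬝ᵥ v with hr
  rcases eq_or_lt_of_le hp0 with hpz | hppos
  · rw [← hpz, Real.sqrt_zero]
    exact mul_nonneg ha (Real.sqrt_nonneg _)
  rcases eq_or_lt_of_le hr0 with hrz | hrpos
  · exfalso
    have hv : v = 0 := dotProduct_self_eq_zero.mp hrz.symm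
    have : p = 0 := by rw [hp, hu, hv, Matrix.mulVec_zero, zero_dotProduct]
    exact absurd this hppos.ne'
  · have hsp : 0 < Real.sqrt p := Real.sqrt_pos.mpr hppos
    have hsr : 0 < Real.sqrt r := Real.sqrt_pos.mpr hrpos
    have hsq : 0 < Real.sqrt r / Real.sqrt p := div_pos hsr hsp
    have key := bilin' u v (Real.sqrt r / Real.sqrt p) hsq
    have hmsp : Real.sqrt p * Real.sqrt p = p := Real.mul_self_sqrt hppos.le
    have hmsr : Real.sqrt r * Real.sqrt r = r := Real.mul_self_sqrt hrpos.le
    have hlhs : u ⬝ᵥ (A *ᵥ v) = p := by rw [hp, hu]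
    have e1 : (Real.sqrt r / Real.sqrt p) * p = Real.sqrt r * Real.sqrt p := by
      field_simp
      nlinarith [hmsp]
    have e2 : (Real.sqrt r / Real.sqrt p)⁻¹ * r = Real.sqrt p * Real.sqrt r := by
      rw [inv_div]
      field_simp
      nlinarith [hmsr]
    rw [hlhs, e1, e2] at key
    have : Real.sqrt p * Real.sqrt p ≤ Real.sqrt p * (a * Real.sqrt r) := by
      rw [hmsp]
      nlinarith [key]
    exact le_of_mul_le_mul_left this hsp

end AuxNorm

section Loc
variable {V : Type*} [Fintype V] [DecidableEq V] (G : SimpleGraph V) {n : V → ℕ}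

private def Loc (r : ℕ) (M : Matrix (Σ i : V, Fin (n i)) (Σ i : V, Fin (n i)) ℝ) : Prop :=
  ∀ a b : Σ i : V, Fin (n i), (r : ℕ∞) < G.edist a.1 b.1 → M a b = 0

private lemma Loc.mul {r s : ℕ} {M N : Matrix (Σ i : V, Fin (n i)) (Σ i : V, Fin (n i)) ℝ}
    (hM : Loc G r M) (hN : Loc G s N) : Loc G (r + s) (M * N) := by
  intro a b hab
  rw [Matrix.mul_apply]
  apply Finset.sum_eq_zero
  intro k _
  by_cases h1 : M a k = 0
  · rw [h1, zero_mul]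
  by_cases h2 : N k b = 0
  · rw [h2, mul_zero]
  exfalso
  have d1 : G.edist a.1 k.1 ≤ r := by
    by_contra hc
    exact h1 (hM a k (lt_of_not_ge hc))
  have d2 : G.edist k.1 b.1 ≤ s := by
    by_contra hc
    exact h2 (hN k b (lt_of_not_ge hc))
  have h3 := SimpleGraph.edist_triangle (u := a.1) (v := k.1) (w := b.1) (G := G)
  have h4 : G.edist a.1 b.1 ≤ (r : ℕ∞) + s := h3.trans (add_le_add d1 d2)
  rw [← Nat.cast_add] at h4
  exact absurd hab (not_lt.mpr h4)

private lemma Loc.one : Loc (n := n) G 0 1 := by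
  intro a b hab
  have hne : a.1 ≠ b.1 := by
    intro h
    rw [show a.1 = b.1 from h, SimpleGraph.edist_self] at hab
    simp at hab
  exact Matrix.one_apply_ne (fun h => hne (congrArg Sigma.fst h))

end Loc

section Emb
variable {V : Type*} [Fintype V] [DecidableEq V] {n : V → ℕ}

private def emb (n : V → ℕ) (k : V) : Matrix (Σ i : V, Fin (n i)) (Fin (n k)) ℝ :=
  Matrix.of fun a p => if a = ⟨k, p⟩ then 1 else 0

private lemma emb_mul_emb (k : V) : (emb n k)ᴴ * emb n k = 1 := by
  ext p q
  simp only [Matrix.mul_apply, Matrix.conjTranspose_apply, emb, Matrix.of_apply, star_trivial]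
  rw [Finset.sum_eq_single (⟨k, p⟩ : Σ i : V, Fin (n i))]
  · rw [if_pos rfl, one_mul, Matrix.one_apply]
    by_cases h : p = q
    · rw [if_pos (by rw [h]), if_pos h]
    · rw [if_neg (fun hc => h (by simpa [Sigma.mk.inj_iff] using hc)), if_neg h]
  · intro b _ hb
    rw [if_neg hb, zero_mul]
  · simp

private lemma norm_emb_le (k : V) : ‖emb n k‖ ≤ 1 := by
  have h := Matrix.l2_opNorm_conjTranspose_mul_self (emb n k)
  rw [emb_mul_emb] at h
  have h1 : ‖(1 : Matrix (Fin (n k)) (Fin (n k)) ℝ)‖ ≤ 1 := l2_opNorm_one_le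
  nlinarith [norm_nonneg (emb n k)]

private lemma block_eq (M : Matrix (Σ i : V, Fin (n i)) (Σ i : V, Fin (n i)) ℝ) (i j : V) :
    Matrix.of (fun (p : Fin (n i)) (r : Fin (n j)) => M ⟨i, p⟩ ⟨j, r⟩)
      = (emb n i)ᴴ * M * emb n j := by
  ext p r
  simp only [Matrix.mul_apply, Matrix.conjTranspose_apply, emb, Matrix.of_apply, star_trivial]
  rw [Finset.sum_eq_single (⟨j, r⟩ : Σ i : V, Fin (n i))]
  · rw [if_pos rfl, mul_one]
    rw [Finset.sum_eq_single (⟨i, p⟩ : Σ i : V, Fin (n i))]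
    · rw [if_pos rfl, one_mul]
    · intro b _ hb; rw [if_neg hb, zero_mul]
    · simp
  · intro b _ hb; rw [if_neg hb, mul_zero]
  · simp

private lemma norm_block_le (M : Matrix (Σ i : V, Fin (n i)) (Σ i : V, Fin (n i)) ℝ) (i j : V) :
    ‖Matrix.of (fun (p : Fin (n i)) (r : Fin (n j)) => M ⟨i, p⟩ ⟨j, r⟩)‖ ≤ ‖M‖ := by
  rw [block_eq]
  calc ‖(emb n i)ᴴ * M * emb n j‖ ≤ ‖(emb n i)ᴴ * M‖ * ‖emb n j‖ := Matrix.l2_opNorm_mul _ _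
    _ ≤ ‖(emb n i)ᴴ‖ * ‖M‖ * ‖emb n j‖ := by
        have := Matrix.l2_opNorm_mul (emb n i)ᴴ M
        have h2 : (0:ℝ) ≤ ‖emb n j‖ := norm_nonneg _
        nlinarith
    _ ≤ 1 * ‖M‖ * 1 := by
        rw [Matrix.l2_opNorm_conjTranspose]
        gcongr
        · exact norm_emb_le i
        · exact norm_emb_le j
    _ = ‖M‖ := by ring

end Emb

/-- Exponential decay of the blocks of the inverse of a symmetric invertible
graph-structured block matrix: if the `(i,j)` block of `H` vanishes for non-adjacent
`i ≠ j` and the singular values of `H` lie in `[σlo, σhi]`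
(expressed via `σlo² I ⪯ H² ⪯ σhi² I`), then the `(i,j)` block of `H⁻¹` has operator
2-norm at most `(σhi/σlo²) ρ^⌈(d(i,j)−1)/2⌉` with `ρ = (σhi²−σlo²)/(σhi²+σlo²)`. -/
theorem blocks_of_inverse_exponential_decay
    {V : Type*} [Fintype V] [DecidableEq V] (G : SimpleGraph V)
    (n : V → ℕ) (H : Matrix (Σ i : V, Fin (n i)) (Σ i : V, Fin (n i)) ℝ)
    (hH : ∀ a b : Σ i : V, Fin (n i), a.1 ≠ b.1 → ¬ G.Adj a.1 b.1 → H a b = 0)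
    (hsymm : H.IsSymm) (hinv : IsUnit H)
    (σlo σhi : ℝ) (hσ0 : 0 < σlo) (hσ : σlo ≤ σhi)
    (hlow : (H ^ 2 - σlo ^ 2 • (1 : Matrix _ _ ℝ)).PosSemidef)
    (hupp : (σhi ^ 2 • (1 : Matrix _ _ ℝ) - H ^ 2).PosSemidef) :
    ∀ i j : V, ∀ D : ℕ, (D : ℕ∞) ≤ G.edist i j →
      ‖Matrix.of (fun (p : Fin (n i)) (r : Fin (n j)) => H⁻¹ ⟨i, p⟩ ⟨j, r⟩)‖ ≤
        (σhi / σlo ^ 2) *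
          ((σhi ^ 2 - σlo ^ 2) / (σhi ^ 2 + σlo ^ 2)) ^ (⌈((D : ℝ) - 1) / 2⌉.toNat) := by
  have hσhi0 : 0 < σhi := lt_of_lt_of_le hσ0 hσ
  have hs : (0:ℝ) < σhi ^ 2 + σlo ^ 2 := by positivity
  set s := σhi ^ 2 + σlo ^ 2 with hs_def
  set c := 2 / s with hc_def
  set ρ := (σhi ^ 2 - σlo ^ 2) / s with hρ_def
  have hc : 0 < c := by rw [hc_def]; positivity
  have hρ0 : 0 ≤ ρ := div_nonneg (by nlinarith) hs.le
  have hρ1 : ρ < 1 := by rw [hρ_def, div_lt_one hs]; nlinarith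
  set B := (1 : Matrix (Σ i : V, Fin (n i)) (Σ i : V, Fin (n i)) ℝ) - c • H ^ 2 with hB_def
  have hT : Hᵀ = H := hsymm.eq
  -- transpose of B
  have hH2T : (H ^ 2)ᵀ = H ^ 2 := by
    rw [pow_two, Matrix.transpose_mul, hT, ← pow_two]
  have hBT : Bᵀ = B := by
    rw [hB_def, Matrix.transpose_sub, Matrix.transpose_one, Matrix.transpose_smul, hH2T]
  -- norm bounds
  have hHnorm : ‖H‖ ≤ σhi := by
    apply norm_le_of_sq H σhi hσhi0.le
    rw [hT, ← pow_two]
    exact hupp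
  have hpm1 : (ρ • (1 : Matrix (Σ i : V, Fin (n i)) (Σ i : V, Fin (n i)) ℝ) - B).PosSemidef := by
    have h1 : c * σlo ^ 2 = 1 - ρ := by
      rw [hc_def, hρ_def]
      field_simp
      ring
    have e : ρ • (1 : Matrix (Σ i : V, Fin (n i)) (Σ i : V, Fin (n i)) ℝ) - B
        = c • (H ^ 2 - σlo ^ 2 • 1) := by
      rw [hB_def, smul_sub, smul_smul, h1, sub_smul, one_smul]
      abel
    rw [e]
    exact psd_smul hlow hc.le
  have hpm2 : (ρ • (1 : Matrix (Σ i : V, Fin (n i)) (Σ i : V, Fin (n i)) ℝ) + B).PosSemidef := by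
    have h1 : c * σhi ^ 2 = 1 + ρ := by
      rw [hc_def, hρ_def]
      field_simp
      ring
    have e : ρ • (1 : Matrix (Σ i : V, Fin (n i)) (Σ i : V, Fin (n i)) ℝ) + B
        = c • (σhi ^ 2 • 1 - H ^ 2) := by
      rw [hB_def, smul_sub, smul_smul, h1, add_smul, one_smul]
      abel
    rw [e]
    exact psd_smul hupp hc.le
  have hBnorm : ‖B‖ ≤ ρ := norm_le_of_pm B hBT ρ hρ0 hpm1 hpm2
  have hBpow : ∀ q : ℕ, ‖B ^ q‖ ≤ ρ ^ q := by
    intro q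
    induction q with
    | zero => simpa using l2_opNorm_one_le
    | succ q ih =>
        rw [pow_succ, pow_succ]
        calc ‖B ^ q * B‖ ≤ ‖B ^ q‖ * ‖B‖ := Matrix.l2_opNorm_mul _ _
          _ ≤ ρ ^ q * ρ := mul_le_mul ih hBnorm (norm_nonneg _) (pow_nonneg hρ0 _)
  -- locality
  have hLocH : Loc G 1 H := by
    intro a b hab
    apply hH a b
    · intro h
      rw [show a.1 = b.1 from h, SimpleGraph.edist_self] at hab
      simp at hab
    · intro hadj
      rw [(SimpleGraph.edist_eq_one_iff_adj).mpr hadj] at hab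
      exact absurd hab (lt_irrefl _)
  have hLocB : Loc G 2 B := by
    intro a b hab
    have h0 : ((0:ℕ) : ℕ∞) < G.edist a.1 b.1 := by
      refine lt_of_le_of_lt ?_ hab
      exact_mod_cast le_of_lt (by norm_num : (0:ℕ) < 2)
    have h1 : (1 : Matrix (Σ i : V, Fin (n i)) (Σ i : V, Fin (n i)) ℝ) a b = 0 :=
      Loc.one G a b h0
    have h2 : (H * H) a b = 0 := Loc.mul G hLocH hLocH a b (by exact_mod_cast hab)
    show ((1 : Matrix (Σ i : V, Fin (n i)) (Σ i : V, Fin (n i)) ℝ) - c • H ^ 2) a b = 0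
    rw [Matrix.sub_apply, Matrix.smul_apply, pow_two, h1, h2, smul_zero, sub_zero]
  have hLocBpow : ∀ q : ℕ, Loc G (2 * q) (B ^ q) := by
    intro q
    induction q with
    | zero => simpa using Loc.one G
    | succ q ih =>
        have h : 2 * (q + 1) = 2 * q + 2 := by ring
        rw [h, pow_succ]
        exact Loc.mul G ih hLocB
  have hLocHB : ∀ q : ℕ, Loc G (2 * q + 1) (H * B ^ q) := by
    intro q
    have h : 2 * q + 1 = 1 + 2 * q := by ring
    rw [h]
    exact Loc.mul G hLocH (hLocBpow q)
  -- Neumann identity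
  have hdet : IsUnit H.det := (Matrix.isUnit_iff_isUnit_det H).mp hinv
  have hHinv : H⁻¹ * H = 1 := Matrix.nonsing_inv_mul H hdet
  have hId : ∀ N : ℕ, H⁻¹ = c • (H * ∑ q ∈ Finset.range N, B ^ q) + H⁻¹ * B ^ N := by
    intro N
    have hgeom : (1 - B) * (∑ q ∈ Finset.range N, B ^ q) = 1 - B ^ N := by
      have h := mul_geom_sum B N
      have h2 : (1 - B) * ∑ q ∈ Finset.range N, B ^ q
          = -((B - 1) * ∑ q ∈ Finset.range N, B ^ q) := by
        rw [← neg_mul, neg_sub]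
      rw [h2, h, neg_sub]
    have hcH : (1 : Matrix (Σ i : V, Fin (n i)) (Σ i : V, Fin (n i)) ℝ) - B = c • H ^ 2 := by
      rw [hB_def, sub_sub_cancel]
    have key : H * (c • (H * ∑ q ∈ Finset.range N, B ^ q)) = 1 - B ^ N := by
      rw [mul_smul_comm, ← mul_assoc, ← pow_two, ← smul_mul_assoc, ← hcH, hgeom]
    calc H⁻¹ = H⁻¹ * (1 - B ^ N) + H⁻¹ * B ^ N := by
          rw [mul_sub, mul_one, sub_add_cancel]
      _ = H⁻¹ * (H * (c • (H * ∑ q ∈ Finset.range N, B ^ q))) + H⁻¹ * B ^ N := by rw [key]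
      _ = c • (H * ∑ q ∈ Finset.range N, B ^ q) + H⁻¹ * B ^ N := by
          rw [← mul_assoc, hHinv, one_mul]
  -- main estimate
  intro i j D hD
  set q0 := (⌈((D : ℝ) - 1) / 2⌉).toNat with hq0_def
  have hvanish : ∀ q, q < q0 → ∀ (p : Fin (n i)) (r : Fin (n j)),
      (H * B ^ q) ⟨i, p⟩ ⟨j, r⟩ = 0 := by
    intro q hq p r
    apply hLocHB q ⟨i, p⟩ ⟨j, r⟩
    have h1 : (q : ℤ) < ⌈((D : ℝ) - 1) / 2⌉ := Int.lt_toNat.mp hq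
    have h2 : (q : ℝ) < ((D : ℝ) - 1) / 2 := by exact_mod_cast Int.lt_ceil.mp h1
    have h3 : 2 * q + 1 < D := by
      have : (2 * (q : ℝ) + 1) < D := by linarith
      exact_mod_cast this
    calc ((2 * q + 1 : ℕ) : ℕ∞) < (D : ℕ∞) := by exact_mod_cast h3
      _ ≤ G.edist i j := hD
  have hblock : ∀ M : Matrix (Σ i : V, Fin (n i)) (Σ i : V, Fin (n i)) ℝ,
      Matrix.of (fun (p : Fin (n i)) (r : Fin (n j)) => M ⟨i, p⟩ ⟨j, r⟩)
        = (emb n i)ᴴ * M * emb n j := fun M => block_eq M i j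
  have hbound : ∀ N : ℕ,
      ‖Matrix.of (fun (p : Fin (n i)) (r : Fin (n j)) => H⁻¹ ⟨i, p⟩ ⟨j, r⟩)‖
        ≤ σhi / σlo ^ 2 * ρ ^ q0 + ‖H⁻¹‖ * ρ ^ N := by
    intro N
    have hB1 : (emb n i)ᴴ * H⁻¹ * emb n j
        = c • (∑ q ∈ Finset.Ico q0 N, (emb n i)ᴴ * (H * B ^ q) * emb n j)
          + (emb n i)ᴴ * (H⁻¹ * B ^ N) * emb n j := by
      conv_lhs => rw [hId N]
      rw [Finset.mul_sum]
      simp only [Matrix.mul_add, Matrix.add_mul, Matrix.mul_smul, Matrix.smul_mul,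
        Matrix.mul_sum, Matrix.sum_mul, Finset.mul_sum, Finset.sum_mul, mul_assoc]
      congr 2
      apply (Finset.sum_subset ?_ ?_).symm
      · intro q hq
        rw [Finset.mem_Ico] at hq
        exact Finset.mem_range.mpr hq.2
      · intro q hqN hq
        rw [Finset.mem_Ico, not_and_or, not_le] at hq
        have hqlt : q < q0 := by
          rcases hq with h | h
          · exact h
          · exact absurd (Finset.mem_range.mp hqN) h
        have hz : (emb n i)ᴴ * (H * B ^ q) * emb n j = 0 := by
          rw [← hblock]
          ext p r
          exact hvanish q hqlt p r
        simpa only [mul_assoc] using hz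
    rw [hblock, hB1]
    have tail_le : ‖(emb n i)ᴴ * (H⁻¹ * B ^ N) * emb n j‖ ≤ ‖H⁻¹‖ * ρ ^ N := by
      rw [← hblock]
      calc ‖Matrix.of (fun (p : Fin (n i)) (r : Fin (n j)) => (H⁻¹ * B ^ N) ⟨i, p⟩ ⟨j, r⟩)‖
          ≤ ‖H⁻¹ * B ^ N‖ := norm_block_le _ i j
        _ ≤ ‖H⁻¹‖ * ‖B ^ N‖ := Matrix.l2_opNorm_mul _ _
        _ ≤ ‖H⁻¹‖ * ρ ^ N := by
            have := hBpow N
            have h0 : (0:ℝ) ≤ ‖H⁻¹‖ := norm_nonneg _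
            nlinarith [norm_nonneg (B ^ N)]
    have sum_le : ‖∑ q ∈ Finset.Ico q0 N, (emb n i)ᴴ * (H * B ^ q) * emb n j‖
        ≤ ∑ q ∈ Finset.Ico q0 N, σhi * ρ ^ q := by
      refine (norm_sum_le _ _).trans (Finset.sum_le_sum fun q _ => ?_)
      rw [← hblock]
      calc ‖Matrix.of (fun (p : Fin (n i)) (r : Fin (n j)) => (H * B ^ q) ⟨i, p⟩ ⟨j, r⟩)‖
          ≤ ‖H * B ^ q‖ := norm_block_le _ i j
        _ ≤ ‖H‖ * ‖B ^ q‖ := Matrix.l2_opNorm_mul _ _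
        _ ≤ σhi * ρ ^ q := by
            have := hBpow q
            have h0 : (0:ℝ) ≤ ‖H‖ := norm_nonneg _
            have h1 : (0:ℝ) ≤ ρ ^ q := pow_nonneg hρ0 _
            nlinarith [norm_nonneg (B ^ q)]
    have hgeo : ∑ q ∈ Finset.Ico q0 N, ρ ^ q ≤ ρ ^ q0 * (1 / (1 - ρ)) := by
      rw [Finset.sum_Ico_eq_sum_range]
      simp only [pow_add]
      rw [← Finset.mul_sum]
      have hgs : ∑ k ∈ Finset.range (N - q0), ρ ^ k ≤ 1 / (1 - ρ) := by
        rcases eq_or_ne ρ 1 with h | h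
        · exact absurd h (ne_of_lt hρ1)
        · rw [geom_sum_eq h]
          have heq : (ρ ^ (N - q0) - 1) / (ρ - 1) = (1 - ρ ^ (N - q0)) / (1 - ρ) := by
            rw [← neg_div_neg_eq]
            ring_nf
          rw [heq]
          have h1ρ : (0:ℝ) < 1 - ρ := by linarith
          have h2 : 1 - ρ ^ (N - q0) ≤ 1 := by
            have := pow_nonneg hρ0 (N - q0)
            linarith
          gcongr
      exact mul_le_mul_of_nonneg_left hgs (pow_nonneg hρ0 _)
    have hconst : c * (σhi * (ρ ^ q0 * (1 / (1 - ρ)))) = σhi / σlo ^ 2 * ρ ^ q0 := by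
      have h1ρ : 1 - ρ = 2 * σlo ^ 2 / s := by
        rw [hρ_def]
        field_simp
        ring
      rw [hc_def, h1ρ]
      have hσlo : σlo ≠ 0 := ne_of_gt hσ0
      field_simp
    calc ‖c • (∑ q ∈ Finset.Ico q0 N, (emb n i)ᴴ * (H * B ^ q) * emb n j)
          + (emb n i)ᴴ * (H⁻¹ * B ^ N) * emb n j‖
        ≤ ‖c • (∑ q ∈ Finset.Ico q0 N, (emb n i)ᴴ * (H * B ^ q) * emb n j)‖
          + ‖(emb n i)ᴴ * (H⁻¹ * B ^ N) * emb n j‖ := norm_add_le _ _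
      _ ≤ c * (∑ q ∈ Finset.Ico q0 N, σhi * ρ ^ q) + ‖H⁻¹‖ * ρ ^ N := by
          have h1 : ‖c • (∑ q ∈ Finset.Ico q0 N, (emb n i)ᴴ * (H * B ^ q) * emb n j)‖
              = c * ‖∑ q ∈ Finset.Ico q0 N, (emb n i)ᴴ * (H * B ^ q) * emb n j‖ := by
            rw [norm_smul, Real.norm_eq_abs, abs_of_pos hc]
          rw [h1]
          have := mul_le_mul_of_nonneg_left sum_le hc.le
          linarith [tail_le]
      _ ≤ c * (σhi * (ρ ^ q0 * (1 / (1 - ρ)))) + ‖H⁻¹‖ * ρ ^ N := by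
          rw [← Finset.mul_sum]
          have h2 : σhi * (∑ q ∈ Finset.Ico q0 N, ρ ^ q) ≤ σhi * (ρ ^ q0 * (1 / (1 - ρ))) :=
            mul_le_mul_of_nonneg_left hgeo hσhi0.le
          have := mul_le_mul_of_nonneg_left h2 hc.le
          linarith
      _ = σhi / σlo ^ 2 * ρ ^ q0 + ‖H⁻¹‖ * ρ ^ N := by rw [hconst]
  -- pass to the limit
  have h0 : Filter.Tendsto (fun N : ℕ => ρ ^ N) Filter.atTop (nhds 0) :=
    tendsto_pow_atTop_nhds_zero_of_lt_one hρ0 hρ1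
  have htend : Filter.Tendsto (fun N : ℕ => σhi / σlo ^ 2 * ρ ^ q0 + ‖H⁻¹‖ * ρ ^ N)
      Filter.atTop (nhds (σhi / σlo ^ 2 * ρ ^ q0)) := by
    have h1 := (h0.const_mul ‖H⁻¹‖).const_add (σhi / σlo ^ 2 * ρ ^ q0)
    simpa using h1
  exact ge_of_tendsto htend (Filter.Eventually.of_forall hbound)
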